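/- In any ontological model for ℂ² with D injective, for every unit vector ψ ∈ ℂ² and every unit vector ψ⊥ orthogonal to ψ: ρ₁(Λ_ψ ∩ Λ_{ψ⊥}) = 0, where ρ₁ := 2·D⁻¹(½I) and Λ_φ := {λ ∈ Λ : p_{P_φ}(λ) = 1}. -/

import Mathlib

open MeasureTheory
open scoped NNReal ENNReal ComplexOrder

noncomputable section

/-- The rank-one projection `|ψ⟩⟨ψ|` associated with a vector `ψ ∈ ℂⁿ`. -/
def proj {n : ℕ} (ψ : EuclideanSpace ℂ (Fin n)) : Matrix (Fin n) (Fin n) ℂ :=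
  Matrix.of fun i j => ψ i * (starRingEnd ℂ) (ψ j)

/-- An ontological model for `ℂⁿ`: a measurable space `Λ` of ontic states, a convex set `C`
of preparable probability measures on `Λ`, measurable response functions `p A : Λ → [0,1]`
for each effect `A` (`0 ≤ A ≤ 1` in the Loewner order), and a map `D` from `C` onto the set
of density matrices reproducing the quantum statistics. -/
structure OntModel (n : ℕ) (Λ : Type*) [MeasurableSpace Λ] where
  C : Set (Measure Λ)
  prob : ∀ ρ ∈ C, IsProbabilityMeasure ρ
  convexC : ∀ ρa ∈ C, ∀ ρb ∈ C, ∀ s : ℝ≥0, s ≤ 1 → s • ρa + (1 - s) • ρb ∈ C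
  p : Matrix (Fin n) (Fin n) ℂ → Λ → ℝ
  p_meas : ∀ A, Measurable (p A)
  p_nonneg : ∀ A l, 0 ≤ p A l
  p_le_one : ∀ A l, p A l ≤ 1
  D : Measure Λ → Matrix (Fin n) (Fin n) ℂ
  D_psd : ∀ ρ ∈ C, (D ρ).PosSemidef
  D_trace : ∀ ρ ∈ C, (D ρ).trace = 1
  D_surj : ∀ W : Matrix (Fin n) (Fin n) ℂ, W.PosSemidef → W.trace = 1 → ∃ ρ ∈ C, D ρ = W
  agree : ∀ ρ ∈ C, ∀ A : Matrix (Fin n) (Fin n) ℂ, A.PosSemidef → (1 - A).PosSemidef →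
    ((∫ l, p A l ∂ρ : ℝ) : ℂ) = (D ρ * A).trace

/- ### Auxiliary lemmas -/

lemma proj_psd' (ψ : EuclideanSpace ℂ (Fin 2)) : (proj ψ).PosSemidef := by
  rw [Matrix.posSemidef_iff_dotProduct_mulVec]
  constructor
  · ext i j
    simp [proj, Matrix.conjTranspose_apply, mul_comm]
  · intro x
    have h : dotProduct (star x) ((proj ψ).mulVec x)
        = star (starRingEnd ℂ (ψ 0) * x 0 + starRingEnd ℂ (ψ 1) * x 1)
          * (starRingEnd ℂ (ψ 0) * x 0 + starRingEnd ℂ (ψ 1) * x 1) := by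
      simp only [dotProduct, Matrix.mulVec, proj, Matrix.of_apply, Pi.star_apply,
        Fin.sum_univ_two, star_add, star_mul', Complex.star_def, Complex.conj_conj]
      ring
    rw [h]
    exact star_mul_self_nonneg _

lemma proj_add_proj' (ψ ψp : EuclideanSpace ℂ (Fin 2))
    (h1 : starRingEnd ℂ (ψ 0) * ψ 0 + starRingEnd ℂ (ψ 1) * ψ 1 = 1)
    (h2 : starRingEnd ℂ (ψp 0) * ψp 0 + starRingEnd ℂ (ψp 1) * ψp 1 = 1)
    (h3 : starRingEnd ℂ (ψ 0) * ψp 0 + starRingEnd ℂ (ψ 1) * ψp 1 = 0) :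
    proj ψ + proj ψp = 1 := by
  set U : Matrix (Fin 2) (Fin 2) ℂ := Matrix.of fun i j => ![ψ i, ψp i] j with hU
  have h3' : starRingEnd ℂ (ψp 0) * ψ 0 + starRingEnd ℂ (ψp 1) * ψ 1 = 0 := by
    have := congrArg (starRingEnd ℂ) h3
    simpa [_root_.map_add, _root_.map_mul, mul_comm] using this
  have hUU : U.conjTranspose * U = 1 := by
    ext i j
    fin_cases i <;> fin_cases j <;>
      simp [hU, Matrix.mul_apply, Fin.sum_univ_two, Matrix.conjTranspose_apply,
        Matrix.one_apply] <;>
      first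
        | linear_combination h1
        | linear_combination h2
        | linear_combination h3
        | linear_combination h3'
  have hUU' : U * U.conjTranspose = 1 := mul_eq_one_comm.mp hUU
  calc proj ψ + proj ψp = U * U.conjTranspose := by
        ext i j
        fin_cases i <;> fin_cases j <;>
          simp [proj, hU, Matrix.mul_apply, Fin.sum_univ_two, Matrix.conjTranspose_apply,
            Matrix.add_apply]
    _ = 1 := hUU'

lemma trace_proj' (φ : EuclideanSpace ℂ (Fin 2))
    (s1 : starRingEnd ℂ (φ 0) * φ 0 + starRingEnd ℂ (φ 1) * φ 1 = 1) :
    (proj φ).trace = 1 := by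
  simp only [Matrix.trace, Matrix.diag, proj, Matrix.of_apply, Fin.sum_univ_two]
  linear_combination s1

lemma trace_proj_mul_orth' (ψ ψp : EuclideanSpace ℂ (Fin 2))
    (h3 : starRingEnd ℂ (ψ 0) * ψp 0 + starRingEnd ℂ (ψ 1) * ψp 1 = 0) :
    (proj ψ * proj ψp).trace = 0 := by
  simp only [Matrix.trace, Matrix.diag, Matrix.mul_apply, proj, Matrix.of_apply,
    Fin.sum_univ_two]
  linear_combination (ψ 0 * starRingEnd ℂ (ψp 0) + ψ 1 * starRingEnd ℂ (ψp 1)) * h3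

lemma norm_one_sum' (ψ : EuclideanSpace ℂ (Fin 2)) (hψ : ‖ψ‖ = 1) :
    starRingEnd ℂ (ψ 0) * ψ 0 + starRingEnd ℂ (ψ 1) * ψ 1 = 1 := by
  have h : (inner ℂ ψ ψ : ℂ) = 1 := by
    rw [inner_self_eq_norm_sq_to_K, hψ]; norm_num
  simp only [PiLp.inner_apply, RCLike.inner_apply, Fin.sum_univ_two] at h
  linear_combination h

lemma orth_sum' (ψ ψp : EuclideanSpace ℂ (Fin 2)) (horth : inner ℂ ψ ψp = (0:ℂ)) :
    starRingEnd ℂ (ψ 0) * ψp 0 + starRingEnd ℂ (ψ 1) * ψp 1 = 0 := by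
  simp only [PiLp.inner_apply, RCLike.inner_apply, Fin.sum_univ_two] at horth
  linear_combination horth

lemma integrable_p' {Λ : Type*} [MeasurableSpace Λ] (f : Λ → ℝ) (hf : Measurable f)
    (h0 : ∀ l, 0 ≤ f l) (h1 : ∀ l, f l ≤ 1) (μ : Measure Λ) [IsFiniteMeasure μ] :
    Integrable f μ := by
  refine Integrable.mono' (integrable_const 1) hf.aestronglyMeasurable ?_
  exact ae_of_all _ fun l => by rw [Real.norm_eq_abs, abs_of_nonneg (h0 l)]; exact h1 l

lemma measure_eq_one_zero' {Λ : Type*} [MeasurableSpace Λ] (f : Λ → ℝ)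
    (h0 : ∀ l, 0 ≤ f l) (μ : Measure Λ) (hfi : Integrable f μ)
    (hz : ∫ l, f l ∂μ = 0) : μ {l | f l = 1} = 0 := by
  have h := (integral_eq_zero_iff_of_nonneg (fun l => h0 l) hfi).mp hz
  have h' : μ {l | ¬ f l = 0} = 0 := by
    simpa [Filter.EventuallyEq, ae_iff] using h
  refine measure_mono_null (fun l hl => ?_) h'
  simp only [Set.mem_setOf_eq] at *
  rw [hl]; norm_num

/-- In an ontological model for `ℂ²` with `D` injective, for orthogonal unit vectors
`ψ, ψ⊥`, the measure `ρ₁ = 2 · D⁻¹(½ I)` gives zero weight to `Λ_ψ ∩ Λ_{ψ⊥}`,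
where `Λ_φ = {λ : p_{P_φ}(λ) = 1}`. -/
theorem rho1_inter_eq_zero {Λ : Type*} [MeasurableSpace Λ] (M : OntModel 2 Λ)
    (hinj : ∀ ρa ∈ M.C, ∀ ρb ∈ M.C, M.D ρa = M.D ρb → ρa = ρb)
    (ψ ψp : EuclideanSpace ℂ (Fin 2)) (hψ : ‖ψ‖ = 1) (hψp : ‖ψp‖ = 1)
    (horth : inner ℂ ψ ψp = (0 : ℂ))
    (ρhalf : Measure Λ) (hρhalf : ρhalf ∈ M.C)
    (hDhalf : M.D ρhalf = (1 / 2 : ℂ) • 1) :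
    ((2 : ℝ≥0) • ρhalf) ({l | M.p (proj ψ) l = 1} ∩ {l | M.p (proj ψp) l = 1}) = 0 := by
  have s1 := norm_one_sum' ψ hψ
  have s2 := norm_one_sum' ψp hψp
  have s3 := orth_sum' ψ ψp horth
  have s3' : starRingEnd ℂ (ψp 0) * ψ 0 + starRingEnd ℂ (ψp 1) * ψ 1 = 0 := by
    have := congrArg (starRingEnd ℂ) s3
    simpa [_root_.map_add, _root_.map_mul, mul_comm] using this
  have hone : proj ψ + proj ψp = 1 := proj_add_proj' ψ ψp s1 s2 s3
  -- preparations for the pure states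
  obtain ⟨ρψ, hρψC, hDψ⟩ := M.D_surj (proj ψ) (proj_psd' ψ) (trace_proj' ψ s1)
  obtain ⟨ρψp, hρψpC, hDψp⟩ := M.D_surj (proj ψp) (proj_psd' ψp) (trace_proj' ψp s2)
  haveI := M.prob _ hρψC
  haveI := M.prob _ hρψpC
  -- the 50/50 mixture
  set μmix : Measure Λ := (1/2 : ℝ≥0) • ρψ + (1/2 : ℝ≥0) • ρψp with hmixdef
  have hmixC : μmix ∈ M.C := by
    have h := M.convexC ρψ hρψC ρψp hρψpC (1/2) (by norm_num)
    have e : (1 - 1/2 : ℝ≥0) = 1/2 := by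
      rw [← NNReal.coe_inj, NNReal.coe_sub (by norm_num)]; norm_num
    rwa [e] at h
  -- key trace identity for unit effects
  have key : ∀ φ φc : EuclideanSpace ℂ (Fin 2),
      starRingEnd ℂ (φ 0) * φ 0 + starRingEnd ℂ (φ 1) * φ 1 = 1 →
      starRingEnd ℂ (φc 0) * φc 0 + starRingEnd ℂ (φc 1) * φc 1 = 1 →
      starRingEnd ℂ (φ 0) * φc 0 + starRingEnd ℂ (φ 1) * φc 1 = 0 →
      (M.D μmix * proj φ).trace = 1/2 := by
    intro φ φc t1 t2 t3
    have hφpsd := proj_psd' φ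
    have h1A : ((1 : Matrix (Fin 2) (Fin 2) ℂ) - proj φ).PosSemidef := by
      have hadd := proj_add_proj' φ φc t1 t2 t3
      have h' : (1 : Matrix (Fin 2) (Fin 2) ℂ) - proj φ = proj φc := by
        rw [← hadd]; abel
      rw [h']; exact proj_psd' φc
    have hmix := M.agree μmix hmixC (proj φ) hφpsd h1A
    have hψa := M.agree ρψ hρψC (proj φ) hφpsd h1A
    have hψpa := M.agree ρψp hρψpC (proj φ) hφpsd h1A
    have hdec : ∫ l, M.p (proj φ) l ∂μmix
        = (1/2 : ℝ) * (∫ l, M.p (proj φ) l ∂ρψ) + (1/2 : ℝ) * (∫ l, M.p (proj φ) l ∂ρψp) := by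
      rw [hmixdef, integral_add_measure
          (integrable_p' _ (M.p_meas _) (M.p_nonneg _) (M.p_le_one _) _)
          (integrable_p' _ (M.p_meas _) (M.p_nonneg _) (M.p_le_one _) _),
        integral_smul_nnreal_measure, integral_smul_nnreal_measure]
      norm_num [NNReal.smul_def]
    rw [hdec] at hmix
    have hcomb : (M.D μmix * proj φ).trace
        = (1/2 : ℂ) * ((M.D ρψ * proj φ).trace) + (1/2 : ℂ) * ((M.D ρψp * proj φ).trace) := by
      rw [← hmix, ← hψa, ← hψpa]
      push_cast
      ring
    have hsum : (proj ψ * proj φ).trace + (proj ψp * proj φ).trace = (proj φ).trace := by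
      rw [← Matrix.trace_add, ← Matrix.add_mul, hone, Matrix.one_mul]
    rw [trace_proj' φ t1] at hsum
    rw [hcomb, hDψ, hDψp]
    linear_combination (1/2 : ℂ) * hsum
  -- probe vectors
  set r : ℝ := (Real.sqrt 2)⁻¹ with hrdef
  have hr : (r : ℂ) * (r : ℂ) = 1/2 := by
    rw [hrdef]
    norm_cast
    rw [← mul_inv, Real.mul_self_sqrt (by norm_num)]
    norm_num
  set W := M.D μmix with hW
  have eq0 := key ((WithLp.equiv 2 (Fin 2 → ℂ)).symm ![1, 0])
      ((WithLp.equiv 2 (Fin 2 → ℂ)).symm ![0, 1])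
      (by simp) (by simp) (by simp)
  have eq1 := key ((WithLp.equiv 2 (Fin 2 → ℂ)).symm ![0, 1])
      ((WithLp.equiv 2 (Fin 2 → ℂ)).symm ![1, 0])
      (by simp) (by simp) (by simp)
  have eqU := key ((WithLp.equiv 2 (Fin 2 → ℂ)).symm ![(r:ℂ), (r:ℂ)])
      ((WithLp.equiv 2 (Fin 2 → ℂ)).symm ![(r:ℂ), -(r:ℂ)])
      (by simp [Complex.conj_ofReal]; try linear_combination 2*hr)
      (by simp [Complex.conj_ofReal]; try linear_combination 2*hr)
      (by simp [Complex.conj_ofReal]; try ring)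
  have eqV := key ((WithLp.equiv 2 (Fin 2 → ℂ)).symm ![(r:ℂ), (r:ℂ)*Complex.I])
      ((WithLp.equiv 2 (Fin 2 → ℂ)).symm ![(r:ℂ), -((r:ℂ)*Complex.I)])
      (by simp [Complex.conj_ofReal, Complex.conj_I];
          try linear_combination 2*hr - ((r:ℂ)*(r:ℂ))*Complex.I_mul_I)
      (by simp [Complex.conj_ofReal, Complex.conj_I];
          try linear_combination 2*hr - ((r:ℂ)*(r:ℂ))*Complex.I_mul_I)
      (by simp [Complex.conj_ofReal, Complex.conj_I];
          try linear_combination ((r:ℂ)*(r:ℂ))*Complex.I_mul_I)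
  simp only [Matrix.trace, Matrix.diag, Matrix.mul_apply, proj, Matrix.of_apply,
    Fin.sum_univ_two, WithLp.equiv_symm_apply, PiLp.toLp_apply, Matrix.cons_val_zero, Matrix.cons_val_one,
    Matrix.head_cons, map_one, map_zero, mul_one, mul_zero, zero_mul, one_mul, add_zero,
    zero_add, Complex.conj_ofReal, map_mul, Complex.conj_I, map_neg] at eq0 eq1 eqU eqV
  have ha : W 0 0 = 1/2 := by linear_combination eq0
  have hd : W 1 1 = 1/2 := by linear_combination eq1
  have hU' : W 0 0 + W 0 1 + W 1 0 + W 1 1 = 1 := by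
    linear_combination 2*eqU - 2*(W 0 0 + W 0 1 + W 1 0 + W 1 1)*hr
  have hV' : W 0 0 + Complex.I * W 0 1 - Complex.I * W 1 0 + W 1 1 = 1 := by
    linear_combination 2*eqV
      - 2*(W 0 0 + Complex.I*W 0 1 - Complex.I*W 1 0 - Complex.I*Complex.I*W 1 1)*hr
      + (W 1 1) * Complex.I_mul_I
  have hb : W 0 1 = 0 := by
    linear_combination (1/2 : ℂ) * (hU' - ha - hd) + (-Complex.I/2) * (hV' - ha - hd)
      + ((W 0 1 - W 1 0)/2) * Complex.I_mul_I
  have hc : W 1 0 = 0 := by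
    linear_combination hU' - ha - hd - hb
  have hDmix : M.D μmix = (1/2 : ℂ) • 1 := by
    ext i j
    fin_cases i <;> fin_cases j <;>
      simp only [← hW, Matrix.smul_apply, Matrix.one_apply, smul_eq_mul] <;>
      simp [ha, hb, hc, hd]
  have hmixhalf : μmix = ρhalf := hinj μmix hmixC ρhalf hρhalf (by rw [hDmix, hDhalf])
  -- the zero-measure facts
  have hz1 : ρψ {l | M.p (proj ψp) l = 1} = 0 := by
    have h1A : ((1 : Matrix (Fin 2) (Fin 2) ℂ) - proj ψp).PosSemidef := by
      have h' : (1 : Matrix (Fin 2) (Fin 2) ℂ) - proj ψp = proj ψ := by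
        rw [← hone]; abel
      rw [h']; exact proj_psd' ψ
    have hag := M.agree ρψ hρψC (proj ψp) (proj_psd' ψp) h1A
    rw [hDψ, trace_proj_mul_orth' ψ ψp s3] at hag
    exact measure_eq_one_zero' _ (M.p_nonneg _)  _
      (integrable_p' _ (M.p_meas _) (M.p_nonneg _) (M.p_le_one _) _)
      (by exact_mod_cast hag)
  have hz2 : ρψp {l | M.p (proj ψ) l = 1} = 0 := by
    have h1A : ((1 : Matrix (Fin 2) (Fin 2) ℂ) - proj ψ).PosSemidef := by
      have h' : (1 : Matrix (Fin 2) (Fin 2) ℂ) - proj ψ = proj ψp := by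
        rw [← hone]; abel
      rw [h']; exact proj_psd' ψp
    have hag := M.agree ρψp hρψpC (proj ψ) (proj_psd' ψ) h1A
    rw [hDψp, trace_proj_mul_orth' ψp ψ s3'] at hag
    exact measure_eq_one_zero' _ (M.p_nonneg _) _
      (integrable_p' _ (M.p_meas _) (M.p_nonneg _) (M.p_le_one _) _)
      (by exact_mod_cast hag)
  have htwo : (2 : ℝ≥0) • μmix = ρψ + ρψp := by
    rw [hmixdef, smul_add, smul_smul, smul_smul]
    norm_num
  rw [← hmixhalf, htwo, Measure.add_apply]
  rw [measure_mono_null Set.inter_subset_right hz1,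
    measure_mono_null Set.inter_subset_left hz2, add_zero]
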